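/- Let $k_0(n) = \lfloor n\,(\ln 5 - \ln 3)/(\ln 5 - \ln 2)\rfloor$. Then for all sufficiently large $n$, $\sum_{k=0}^{k_0(n)} \binom{n}{k} (3/4)^k (3/10)^{n-k} \le 1.05^n \cdot \exp\bigl(-2\,(5/7 - 0.5575)^2\, n\bigr)$, and consequently this sum tends to $0$ as $n \to \infty$. -/

import Mathlib

open Filter

/-- Threshold separating losing from winning numbers of heads in Elsberg's game. -/
noncomputable def k0 (n : ℕ) : ℕ :=
  ⌊(n : ℝ) * (Real.log 5 - Real.log 3) / (Real.log 5 - Real.log 2)⌋₊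

lemma exp_h1 : Real.exp (-(439/700 : ℝ)) ≤ 0.534935 := by
  have h : ((90039/89600:ℝ))^(128:ℕ) ≤ Real.exp (439/700) := by
    have h0 := Real.add_one_le_exp (439/89600 : ℝ)
    calc ((90039/89600:ℝ))^(128:ℕ) ≤ (Real.exp (439/89600))^(128:ℕ) :=
          pow_le_pow_left₀ (by norm_num) (by linarith) 128
      _ = Real.exp (439/700) := by
          rw [← Real.exp_nat_mul]; norm_num
  calc Real.exp (-(439/700:ℝ)) = (Real.exp (439/700))⁻¹ := Real.exp_neg _
    _ ≤ (((90039/89600:ℝ))^(128:ℕ))⁻¹ := by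
        apply inv_anti₀ (by positivity) h
    _ ≤ 0.534935 := by norm_num

lemma exp_h2 : (0.67029 : ℝ) ≤ Real.exp (-(1563279/3920000 : ℝ)) := by
  have h0 := Real.add_one_le_exp (-(1563279/250880000) : ℝ)
  calc (0.67029:ℝ) ≤ ((249316721/250880000:ℝ))^(64:ℕ) := by norm_num
    _ ≤ (Real.exp (-(1563279/250880000)))^(64:ℕ) :=
        pow_le_pow_left₀ (by norm_num) (by linarith) 64
    _ = Real.exp (-(1563279/3920000 : ℝ)) := by
        rw [← Real.exp_nat_mul]; norm_num

lemma exp_h3 : Real.exp (-(192721/3920000 : ℝ)) ≤ 0.95205 := by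
  have h : ((251072721/250880000:ℝ))^(64:ℕ) ≤ Real.exp (192721/3920000) := by
    have h0 := Real.add_one_le_exp (192721/250880000 : ℝ)
    calc ((251072721/250880000:ℝ))^(64:ℕ) ≤ (Real.exp (192721/250880000))^(64:ℕ) :=
          pow_le_pow_left₀ (by norm_num) (by linarith) 64
      _ = Real.exp (192721/3920000) := by
          rw [← Real.exp_nat_mul]; norm_num
  calc Real.exp (-(192721/3920000:ℝ)) = (Real.exp (192721/3920000))⁻¹ := Real.exp_neg _
    _ ≤ (((251072721/250880000:ℝ))^(64:ℕ))⁻¹ := by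
        apply inv_anti₀ (by positivity) h
    _ ≤ 0.95205 := by norm_num

lemma ratio_le : (Real.log 5 - Real.log 3) / (Real.log 5 - Real.log 2) ≤ 223/400 := by
  have h25 : Real.log 2 < Real.log 5 := Real.log_lt_log (by norm_num) (by norm_num)
  have hnum : ((5:ℝ)^(177:ℕ) * 2^(223:ℕ)) ≤ (3:ℝ)^(400:ℕ) := by
    exact_mod_cast (by decide : (5:ℕ)^177 * 2^223 ≤ 3^400)
  have hlog : Real.log ((5:ℝ)^(177:ℕ) * 2^(223:ℕ)) ≤ Real.log ((3:ℝ)^(400:ℕ)) :=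
    Real.log_le_log (by positivity) hnum
  rw [Real.log_mul (by positivity) (by positivity), Real.log_pow, Real.log_pow,
    Real.log_pow] at hlog
  push_cast at hlog
  rw [div_le_iff₀ (by linarith)]
  linarith

lemma k0_le (n : ℕ) : (k0 n : ℝ) ≤ 223/400 * n := by
  have h35 : Real.log 3 ≤ Real.log 5 := Real.log_le_log (by norm_num) (by norm_num)
  have h25 : Real.log 2 < Real.log 5 := Real.log_lt_log (by norm_num) (by norm_num)
  have hnn : 0 ≤ (n : ℝ) * (Real.log 5 - Real.log 3) / (Real.log 5 - Real.log 2) := by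
    exact div_nonneg (mul_nonneg (Nat.cast_nonneg n) (by linarith)) (by linarith)
  calc (k0 n : ℝ) ≤ (n : ℝ) * (Real.log 5 - Real.log 3) / (Real.log 5 - Real.log 2) :=
        Nat.floor_le hnn
    _ = (n : ℝ) * ((Real.log 5 - Real.log 3) / (Real.log 5 - Real.log 2)) := by ring
    _ ≤ (n : ℝ) * (223/400) := by
        exact mul_le_mul_of_nonneg_left ratio_le (by positivity)
    _ = 223/400 * n := by ring

lemma k0_le_n (n : ℕ) : k0 n ≤ n := by
  have := k0_le n
  have h2 : (k0 n : ℝ) ≤ (n : ℝ) := by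
    have hn : (0:ℝ) ≤ (n:ℝ) := Nat.cast_nonneg n
    linarith
  exact_mod_cast h2

lemma main_bound (n : ℕ) :
    (∑ k ∈ Finset.range (k0 n + 1), (n.choose k : ℝ) * (3/4)^k * (3/10)^(n-k))
      ≤ (1.05 * Real.exp (-(192721/3920000 : ℝ)))^n := by
  set m := k0 n with hm
  set t : ℝ := 439/700 with ht
  have hexpm1 : ∀ k ∈ Finset.range (m+1), (1:ℝ) ≤ Real.exp (t * ((m:ℝ) - k)) := by
    intro k hk
    have hk' : (k:ℝ) ≤ m := by
      exact_mod_cast Nat.lt_succ_iff.mp (Finset.mem_range.mp hk)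
    apply Real.one_le_exp
    have : (0:ℝ) ≤ (m:ℝ) - k := by linarith
    positivity
  have step1 : (∑ k ∈ Finset.range (m + 1), (n.choose k : ℝ) * (3/4)^k * (3/10)^(n-k))
      ≤ ∑ k ∈ Finset.range (m + 1),
          (n.choose k : ℝ) * (3/4)^k * (3/10)^(n-k) * Real.exp (t * ((m:ℝ) - k)) := by
    apply Finset.sum_le_sum
    intro k hk
    nth_rewrite 1 [← mul_one ((n.choose k : ℝ) * (3/4)^k * (3/10)^(n-k))]
    exact mul_le_mul_of_nonneg_left (hexpm1 k hk) (by positivity)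
  have step2 : (∑ k ∈ Finset.range (m + 1),
          (n.choose k : ℝ) * (3/4)^k * (3/10)^(n-k) * Real.exp (t * ((m:ℝ) - k)))
      ≤ ∑ k ∈ Finset.range (n + 1),
          (n.choose k : ℝ) * (3/4)^k * (3/10)^(n-k) * Real.exp (t * ((m:ℝ) - k)) := by
    apply Finset.sum_le_sum_of_subset_of_nonneg
    · exact Finset.range_subset_range.mpr (Nat.succ_le_succ (k0_le_n n))
    · intro k _ _
      positivity
  have step3 : (∑ k ∈ Finset.range (n + 1),
          (n.choose k : ℝ) * (3/4)^k * (3/10)^(n-k) * Real.exp (t * ((m:ℝ) - k)))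
      = Real.exp (t * m) * ((3/4) * Real.exp (-t) + 3/10)^n := by
    rw [add_pow, Finset.mul_sum]
    apply Finset.sum_congr rfl
    intro k _
    have h1 : t * ((m:ℝ) - k) = t * m + (k:ℕ) * (-t) := by push_cast; ring
    rw [h1, Real.exp_add, Real.exp_nat_mul, mul_pow]
    ring
  have hB0 : (0:ℝ) ≤ (3/4) * Real.exp (-t) + 3/10 := by positivity
  have step4 : Real.exp (t * m) * ((3/4) * Real.exp (-t) + 3/10)^n
      ≤ Real.exp (t * (223/400) * n) * ((3/4) * Real.exp (-t) + 3/10)^n := by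
    apply mul_le_mul_of_nonneg_right _ (by positivity)
    apply Real.exp_le_exp.mpr
    have := k0_le n
    rw [ht]
    nlinarith [k0_le n]
  have key : Real.exp (t * (223/400)) * ((3/4) * Real.exp (-t) + 3/10)
      ≤ 1.05 * Real.exp (-(192721/3920000 : ℝ)) := by
    have he : Real.exp (t * (223/400)) * Real.exp (-(1563279/3920000 : ℝ))
        = Real.exp (-(192721/3920000 : ℝ)) := by
      rw [← Real.exp_add]; norm_num [ht]
    have h1 := exp_h1
    have h2 := exp_h2
    have hpos : (0:ℝ) < Real.exp (t * (223/400)) := Real.exp_pos _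
    have hB : (3/4) * Real.exp (-t) + 3/10 ≤ 1.05 * Real.exp (-(1563279/3920000 : ℝ)) := by
      rw [ht]; nlinarith
    calc Real.exp (t * (223/400)) * ((3/4) * Real.exp (-t) + 3/10)
        ≤ Real.exp (t * (223/400)) * (1.05 * Real.exp (-(1563279/3920000 : ℝ))) :=
          mul_le_mul_of_nonneg_left hB (le_of_lt hpos)
      _ = 1.05 * Real.exp (-(192721/3920000 : ℝ)) := by rw [← he]; ring
  have step5 : Real.exp (t * (223/400) * n) * ((3/4) * Real.exp (-t) + 3/10)^n
      ≤ (1.05 * Real.exp (-(192721/3920000 : ℝ)))^n := by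
    have h1 : Real.exp (t * (223/400) * n) * ((3/4) * Real.exp (-t) + 3/10)^n
        = (Real.exp (t * (223/400)) * ((3/4) * Real.exp (-t) + 3/10))^n := by
      rw [mul_pow, ← Real.exp_nat_mul, mul_comm (n:ℝ)]
    rw [h1]
    exact pow_le_pow_left₀ (by positivity) key n
  calc (∑ k ∈ Finset.range (m + 1), (n.choose k : ℝ) * (3/4)^k * (3/10)^(n-k))
      ≤ _ := step1
    _ ≤ _ := step2
    _ = _ := step3
    _ ≤ _ := step4
    _ ≤ _ := step5

lemma rhs_eq (n : ℕ) :
    (1.05 : ℝ)^n * Real.exp (-2 * (5/7 - 0.5575)^2 * n)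
      = (1.05 * Real.exp (-(192721/3920000 : ℝ)))^n := by
  have h : (-2 : ℝ) * (5/7 - 0.5575)^2 = -(192721/3920000) := by norm_num
  rw [h, mul_pow, mul_comm (-(192721/3920000 : ℝ)) (n:ℝ), Real.exp_nat_mul]

theorem losing_sum_hoeffding_bound :
    (∀ᶠ n : ℕ in atTop,
      (∑ k ∈ Finset.range (k0 n + 1), (n.choose k : ℝ) * (3/4)^k * (3/10)^(n-k))
        ≤ (1.05 : ℝ)^n * Real.exp (-2 * (5/7 - 0.5575)^2 * n)) ∧
    Tendsto
      (fun n : ℕ => ∑ k ∈ Finset.range (k0 n + 1), (n.choose k : ℝ) * (3/4)^k * (3/10)^(n-k))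
      atTop (nhds 0) := by
  constructor
  · filter_upwards with n
    rw [rhs_eq]
    exact main_bound n
  · have hr0 : (0:ℝ) ≤ 1.05 * Real.exp (-(192721/3920000 : ℝ)) := by positivity
    have hr1 : 1.05 * Real.exp (-(192721/3920000 : ℝ)) < 1 := by
      nlinarith [exp_h3, Real.exp_pos (-(192721/3920000 : ℝ))]
    apply squeeze_zero
    · intro n
      apply Finset.sum_nonneg
      intro k _
      positivity
    · intro n; exact main_bound n
    · exact tendsto_pow_atTop_nhds_zero_of_lt_one hr0 hr1
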